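/- Let |ψ⟩_AB and |φ⟩_AB be pure states on a bipartite finite-dimensional Hilbert space with reduced states ρ_A = Tr_B|ψ⟩⟨ψ| and σ_A = Tr_B|φ⟩⟨φ|. Then there exists a unitary U acting only on system B such that F(ρ_A, σ_A) = |⟨φ|(id_A ⊗ U)|ψ⟩|² (Uhlmann's theorem, achievability direction). -/

import Mathlib

open Matrix ComplexOrder

/-- The positive semidefinite square root of a matrix (junk value `0` off
positive semidefinite matrices). -/
noncomputable def msqrt {n : Type*} [Fintype n] [DecidableEq n] (A : Matrix n n ℂ) :
    Matrix n n ℂ :=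
  letI := Classical.propDecidable
  if h : A.PosSemidef then
    (h.1.eigenvectorUnitary : Matrix n n ℂ) * diagonal ((↑) ∘ Real.sqrt ∘ h.1.eigenvalues) *
      (star h.1.eigenvectorUnitary : Matrix n n ℂ)
  else 0

/-- The trace norm `‖X‖₁ = Tr √(XᴴX)`. -/
noncomputable def traceNorm {n : Type*} [Fintype n] [DecidableEq n] (X : Matrix n n ℂ) : ℝ :=
  (msqrt (Xᴴ * X)).trace.re

/-- The (squared) fidelity `F(ρ,σ) = ‖√ρ √σ‖₁²`. -/
noncomputable def fidelity {n : Type*} [Fintype n] [DecidableEq n] (ρ σ : Matrix n n ℂ) : ℝ :=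
  traceNorm (msqrt ρ * msqrt σ) ^ 2

/-- The trace distance `td(ρ,σ) = ‖ρ - σ‖₁ / 2`. -/
noncomputable def traceDist {n : Type*} [Fintype n] [DecidableEq n] (ρ σ : Matrix n n ℂ) : ℝ :=
  traceNorm (ρ - σ) / 2

/-- The outer product `|u⟩⟨v|`. -/
noncomputable def outer {n : Type*} (u v : n → ℂ) : Matrix n n ℂ :=
  Matrix.of fun i j => u i * (starRingEnd ℂ) (v j)

/-- Partial trace over the first tensor factor. -/
noncomputable def ptrFst {α β : Type*} [Fintype α] (M : Matrix (α × β) (α × β) ℂ) : Matrix β β ℂ :=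
  Matrix.of fun b b' => ∑ a, M (a, b) (a, b')

/-- Partial trace over the second tensor factor. -/
noncomputable def ptrSnd {α β : Type*} [Fintype β] (M : Matrix (α × β) (α × β) ℂ) : Matrix α α ℂ :=
  Matrix.of fun a a' => ∑ b, M (a, b) (a', b)

section UhlmannAux

open Polynomial

variable {n m : Type*} [Fintype n] [DecidableEq n] [Fintype m] [DecidableEq m]

noncomputable def Matrix.PosSemidef.sqrt {A : Matrix n n ℂ} (hA : A.PosSemidef) : Matrix n n ℂ :=
  (hA.1.eigenvectorUnitary : Matrix n n ℂ) * diagonal ((↑) ∘ Real.sqrt ∘ hA.1.eigenvalues) *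
    (star hA.1.eigenvectorUnitary : Matrix n n ℂ)

open scoped MatrixOrder in
lemma Matrix.PosSemidef.sqrt_eq_cfc {A : Matrix n n ℂ} (hA : A.PosSemidef) :
    hA.sqrt = CFC.sqrt A := by
  rw [CFC.sqrt_eq_real_sqrt A hA.nonneg, cfcₙ_eq_cfc, hA.1.cfc_eq, Matrix.IsHermitian.cfc,
    Unitary.conjStarAlgAut_apply]
  rfl

open scoped MatrixOrder in
lemma Matrix.PosSemidef.posSemidef_sqrt {A : Matrix n n ℂ} (hA : A.PosSemidef) :
    hA.sqrt.PosSemidef := by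
  rw [hA.sqrt_eq_cfc]; exact (CFC.sqrt_nonneg A).posSemidef

open scoped MatrixOrder in
lemma Matrix.PosSemidef.sqrt_mul_self {A : Matrix n n ℂ} (hA : A.PosSemidef) :
    hA.sqrt * hA.sqrt = A := by
  rw [hA.sqrt_eq_cfc]; exact CFC.sqrt_mul_sqrt_self A hA.nonneg

open scoped MatrixOrder in
lemma Matrix.PosSemidef.eq_sqrt_of_sq_eq {A B : Matrix n n ℂ} (hB : B.PosSemidef)
    (hA : A.PosSemidef) (h : B ^ 2 = A) : B = hA.sqrt := by
  rw [hA.sqrt_eq_cfc]; exact (CFC.sqrt_unique (by rw [← sq, h]) hB.nonneg).symm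

lemma msqrt_eq {A : Matrix n n ℂ} (hA : A.PosSemidef) : msqrt A = hA.sqrt := by
  rw [msqrt]
  split
  · rw [Matrix.PosSemidef.sqrt]
    congr!
  · exact absurd hA ‹_›

lemma msqrt_posSemidef {A : Matrix n n ℂ} (hA : A.PosSemidef) : (msqrt A).PosSemidef := by
  rw [msqrt_eq hA]; exact hA.posSemidef_sqrt

lemma msqrt_mul_self {A : Matrix n n ℂ} (hA : A.PosSemidef) : msqrt A * msqrt A = A := by
  rw [msqrt_eq hA]; exact hA.sqrt_mul_self

lemma msqrt_eq_of_sq {A B : Matrix n n ℂ} (hB : B.PosSemidef) (h : B * B = A) :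
    msqrt A = B := by
  have hA : A.PosSemidef := by
    subst h
    have := Matrix.posSemidef_self_mul_conjTranspose B
    rwa [hB.isHermitian.eq] at this
  rw [msqrt_eq hA]
  exact (hB.eq_sqrt_of_sq_eq hA (by rw [pow_two, h])).symm

lemma aeval_unitary_conj (U D : Matrix n n ℂ) (hU : U ∈ Matrix.unitaryGroup n ℂ)
    (q : ℂ[X]) :
    aeval (U * D * star U) q = U * aeval D q * star U := by
  have h1 : star U * U = 1 := Matrix.mem_unitaryGroup_iff'.mp hU
  have h2 : U * star U = 1 := Matrix.mem_unitaryGroup_iff.mp hU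
  induction q using Polynomial.induction_on with
  | C a => simp [Algebra.algebraMap_eq_smul_one, Matrix.mul_smul, Matrix.smul_mul, h2]
  | add p q hp hq => simp [hp, hq, Matrix.mul_add, Matrix.add_mul]
  | monomial k a ih =>
      rw [pow_succ, ← mul_assoc, _root_.map_mul, _root_.map_mul (aeval D),
        aeval_X, aeval_X, ih]
      simp only [mul_assoc]
      rw [← mul_assoc (star U) U, h1, one_mul]

lemma aeval_diagonal (d : n → ℂ) (q : ℂ[X]) :
    aeval (Matrix.diagonal d) q = Matrix.diagonal (fun i => aeval (d i) q) := by
  have h := Polynomial.aeval_algHom_apply (Matrix.diagonalAlgHom (n := n) (α := ℂ) ℂ) d q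
  have h2 : (aeval d q : n → ℂ) = fun i => aeval (d i) q :=
    funext fun i => (Polynomial.aeval_algHom_apply (Pi.evalAlgHom ℂ (fun _ : n => ℂ) i) d q).symm
  simpa [Matrix.diagonalAlgHom_apply, h2] using h

lemma aeval_ofReal (r : ℝ) (p : ℝ[X]) :
    aeval ((RCLike.ofReal r : ℂ)) (p.map (algebraMap ℝ ℂ)) = ((p.eval r : ℝ) : ℂ) := by
  rw [Polynomial.aeval_map_algebraMap, ← RCLike.algebraMap_eq_ofReal]
  exact Polynomial.aeval_algebraMap_apply ℂ r p

/-- If a real polynomial interpolates `Real.sqrt` on the eigenvalues of a psd matrix `A`,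
then `msqrt A = p(A)`. -/
lemma msqrt_eq_aeval {A : Matrix n n ℂ} (hA : A.PosSemidef) (p : ℝ[X])
    (hp : ∀ i, p.eval (hA.1.eigenvalues i) = Real.sqrt (hA.1.eigenvalues i)) :
    msqrt A = aeval A (p.map (algebraMap ℝ ℂ)) := by
  rw [msqrt_eq hA, Matrix.PosSemidef.sqrt]
  conv_rhs => rw [hA.1.spectral_theorem, Unitary.conjStarAlgAut_apply]
  rw [aeval_unitary_conj _ _ (hA.1.eigenvectorUnitary).2, aeval_diagonal]
  refine congrArg₂ _ (congrArg₂ _ rfl ?_) rfl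
  rw [Matrix.diagonal_eq_diagonal_iff]
  intro i
  simp only [Function.comp_apply, aeval_ofReal, hp i]

lemma aeval_mul_comm (A : Matrix m n ℂ) (q : ℂ[X]) :
    A * aeval (Aᴴ * A) q = aeval (A * Aᴴ) q * A := by
  induction q using Polynomial.induction_on with
  | C a => simp [Algebra.algebraMap_eq_smul_one, Matrix.mul_smul, Matrix.smul_mul]
  | add p q hp hq => simp [Matrix.mul_add, Matrix.add_mul, hp, hq]
  | monomial k a ih =>
      rw [pow_succ, ← mul_assoc, _root_.map_mul, _root_.map_mul (aeval (A * Aᴴ)),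
        aeval_X, aeval_X, ← Matrix.mul_assoc, ih]
      simp only [Matrix.mul_assoc]

lemma trace_msqrt_comm (A : Matrix m n ℂ) :
    (msqrt (Aᴴ * A)).trace = (msqrt (A * Aᴴ)).trace := by
  have h₁ := Matrix.posSemidef_conjTranspose_mul_self A
  have h₂ := Matrix.posSemidef_self_mul_conjTranspose A
  set s : Finset ℝ :=
    insert 0 ((Finset.univ.image h₁.1.eigenvalues) ∪ (Finset.univ.image h₂.1.eigenvalues))
    with hs
  set p : ℝ[X] := Lagrange.interpolate s id Real.sqrt with hpdef
  have hpeval : ∀ x ∈ s, p.eval x = Real.sqrt x := fun x hx =>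
    Lagrange.eval_interpolate_at_node _ (Set.injOn_id _) hx
  have hp0 : p.eval 0 = 0 := by
    rw [hpeval 0 (by simp [hs])]; exact Real.sqrt_zero
  obtain ⟨q, hq⟩ : (X : ℝ[X]) ∣ p :=
    Polynomial.X_dvd_iff.mpr (by rwa [Polynomial.coeff_zero_eq_eval_zero])
  have e₁ : msqrt (Aᴴ * A) = aeval (Aᴴ * A) (p.map (algebraMap ℝ ℂ)) :=
    msqrt_eq_aeval h₁ p (fun i => hpeval _ (by simp [hs]))
  have e₂ : msqrt (A * Aᴴ) = aeval (A * Aᴴ) (p.map (algebraMap ℝ ℂ)) :=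
    msqrt_eq_aeval h₂ p (fun i => hpeval _ (by simp [hs]))
  rw [e₁, e₂, hq, Polynomial.map_mul, Polynomial.map_X, _root_.map_mul, _root_.map_mul,
    aeval_X, aeval_X]
  have key := aeval_mul_comm A (q.map (algebraMap ℝ ℂ))
  calc ((Aᴴ * A) * aeval (Aᴴ * A) (q.map (algebraMap ℝ ℂ))).trace
      = (Aᴴ * (A * aeval (Aᴴ * A) (q.map (algebraMap ℝ ℂ)))).trace := by rw [Matrix.mul_assoc]
    _ = ((A * aeval (Aᴴ * A) (q.map (algebraMap ℝ ℂ))) * Aᴴ).trace :=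
        Matrix.trace_mul_comm _ _
    _ = ((aeval (A * Aᴴ) (q.map (algebraMap ℝ ℂ)) * A) * Aᴴ).trace := by rw [key]
    _ = (aeval (A * Aᴴ) (q.map (algebraMap ℝ ℂ)) * (A * Aᴴ)).trace := by rw [Matrix.mul_assoc]
    _ = ((A * Aᴴ) * aeval (A * Aᴴ) (q.map (algebraMap ℝ ℂ))).trace :=
        Matrix.trace_mul_comm _ _

lemma polar_of_isUnit {X : Matrix n n ℂ} (hX : IsUnit X.det) :
    (X * (msqrt (Xᴴ * X))⁻¹) ∈ Matrix.unitaryGroup n ℂ ∧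
      X = (X * (msqrt (Xᴴ * X))⁻¹) * msqrt (Xᴴ * X) := by
  have hPsd := msqrt_posSemidef (Matrix.posSemidef_conjTranspose_mul_self X)
  set P := msqrt (Xᴴ * X) with hPdef
  have hPP : P * P = Xᴴ * X := msqrt_mul_self (Matrix.posSemidef_conjTranspose_mul_self X)
  have hdet : IsUnit P.det := by
    have h1 : P.det * P.det = Xᴴ.det * X.det := by
      rw [← Matrix.det_mul, ← Matrix.det_mul, hPP]
    have h2 : IsUnit (Xᴴ.det * X.det) := by
      rw [Matrix.det_conjTranspose]
      exact hX.star.mul hX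
    rw [← h1] at h2
    exact isUnit_of_mul_isUnit_left h2
  have hPH : Pᴴ = P := hPsd.isHermitian
  have hinv1 : P⁻¹ * P = 1 := Matrix.nonsing_inv_mul _ hdet
  have hinv2 : P * P⁻¹ = 1 := Matrix.mul_nonsing_inv _ hdet
  refine ⟨Matrix.mem_unitaryGroup_iff'.mpr ?_, ?_⟩
  · have hstar : star (X * P⁻¹) = P⁻¹ * Xᴴ := by
      rw [Matrix.star_eq_conjTranspose, Matrix.conjTranspose_mul,
        Matrix.conjTranspose_nonsing_inv, hPH]
    rw [hstar, Matrix.mul_assoc, ← Matrix.mul_assoc Xᴴ X P⁻¹, ← hPP,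
      Matrix.mul_assoc P P P⁻¹, hinv2, Matrix.mul_one, hinv1]
  · rw [Matrix.mul_assoc, hinv1, Matrix.mul_one]

lemma isCompact_unitaryGroup : IsCompact (Matrix.unitaryGroup n ℂ : Set (Matrix n n ℂ)) := by
  have hK : IsCompact {M : Matrix n n ℂ | ∀ i j, M i j ∈ Metric.closedBall (0 : ℂ) 1} := by
    have h := isCompact_univ_pi (ι := n)
      (fun _ => isCompact_univ_pi (ι := n) (fun _ => isCompact_closedBall (0 : ℂ) 1))
    have he : (Set.univ.pi fun _ : n => Set.univ.pi fun _ : n => Metric.closedBall (0:ℂ) 1)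
        = {M : n → n → ℂ | ∀ i j, M i j ∈ Metric.closedBall (0 : ℂ) 1} := by
      ext M; simp [Set.mem_pi]
    rw [he] at h
    exact h
  refine hK.of_isClosed_subset ?_ ?_
  · have hc : Continuous fun M : Matrix n n ℂ => star M * M :=
      continuous_star.mul continuous_id
    have : (Matrix.unitaryGroup n ℂ : Set (Matrix n n ℂ))
        = (fun M : Matrix n n ℂ => star M * M) ⁻¹' {(1 : Matrix n n ℂ)} := by
      ext M
      simp [Matrix.mem_unitaryGroup_iff']
    rw [this]
    exact IsClosed.preimage hc isClosed_singleton
  · intro M hM i j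
    have h1 : star M * M = 1 := Matrix.mem_unitaryGroup_iff'.mp hM
    have h2 : ∑ k, Complex.normSq (M k j) = 1 := by
      have := congrFun (congrFun h1 j) j
      rw [Matrix.mul_apply] at this
      have h3 : ∀ k, (star M) j k * M k j = (Complex.normSq (M k j) : ℂ) := fun k => by
        simp [Matrix.star_apply, Complex.normSq_eq_conj_mul_self]
      rw [Finset.sum_congr rfl fun k _ => h3 k] at this
      have h4 : ((∑ k, Complex.normSq (M k j) : ℝ) : ℂ) = 1 := by push_cast at this ⊢; simpa
      exact_mod_cast h4
    have h5 : Complex.normSq (M i j) ≤ 1 := by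
      rw [← h2]
      exact Finset.single_le_sum (f := fun k => Complex.normSq (M k j))
        (fun k _ => Complex.normSq_nonneg _) (Finset.mem_univ i)
    rw [Metric.mem_closedBall, dist_zero_right]
    rw [Complex.norm_def]
    exact Real.sqrt_le_one.mpr h5

lemma exists_unitary_polar (X : Matrix n n ℂ) :
    ∃ V ∈ Matrix.unitaryGroup n ℂ, X = V * msqrt (Xᴴ * X) := by
  classical
  -- the set of bad shifts is finite
  have hfin : {c : ℂ | ¬ IsUnit (X + c • 1).det}.Finite := by
    refine Set.Finite.subset ((X.finite_spectrum (R := ℂ)).preimage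
      (Set.injOn_of_injective neg_injective)) ?_
    intro c hc
    simp only [Set.mem_setOf_eq] at hc
    have : ¬ IsUnit (X + c • (1 : Matrix n n ℂ)) := fun h =>
      hc ((Matrix.isUnit_iff_isUnit_det _).mp h)
    simp only [Set.mem_preimage, spectrum.mem_iff]
    intro hu
    apply this
    have he : algebraMap ℂ (Matrix n n ℂ) (-c) - X = -(X + c • 1) := by
      rw [Algebra.algebraMap_eq_smul_one, neg_smul]
      abel
    rw [he] at hu
    simpa using hu.neg
  set c : ℕ → ℂ := fun k => ((k : ℂ) + 1)⁻¹ with hc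
  have hcinj : Function.Injective c := by
    intro a b hab
    simp only [hc] at hab
    have h2 : ((a : ℂ) + 1) = (b : ℂ) + 1 := inv_injective hab
    have h3 : (a : ℂ) = b := by
      have := add_right_cancel h2
      exact this
    exact_mod_cast h3
  have hB : {k : ℕ | ¬ IsUnit (X + c k • 1).det}.Finite :=
    (hfin.preimage (Set.injOn_of_injective hcinj)).subset (fun k hk => hk)
  obtain ⟨k₀, hk₀⟩ := hB.bddAbove
  set S := k₀ + 1 with hS
  set Y : ℕ → Matrix n n ℂ := fun k => X + c (k + S) • 1 with hY
  have hYunit : ∀ k, IsUnit (Y k).det := by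
    intro k
    by_contra h
    have : k + S ≤ k₀ := hk₀ h
    omega
  -- tendsto
  have hctend : Filter.Tendsto (fun k => c (k + S)) Filter.atTop (nhds 0) := by
    have h1 : Filter.Tendsto (fun k : ℕ => ((k : ℝ) + 1)⁻¹) Filter.atTop (nhds 0) := by
      simpa [one_div] using tendsto_one_div_add_atTop_nhds_zero_nat (𝕜 := ℝ)
    have h2 : Filter.Tendsto c Filter.atTop (nhds 0) := by
      rw [tendsto_zero_iff_norm_tendsto_zero]
      refine h1.congr fun k => ?_
      simp only [hc, norm_inv]
      congr 1
      have : ((k : ℂ) + 1) = ((k + 1 : ℕ) : ℂ) := by push_cast; ring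
      rw [this, Complex.norm_natCast]
      push_cast; ring
    exact h2.comp (Filter.tendsto_add_atTop_nat S)
  have hYtend : Filter.Tendsto Y Filter.atTop (nhds X) := by
    have := Filter.Tendsto.add (tendsto_const_nhds (x := X))
      (hctend.smul (tendsto_const_nhds (x := (1 : Matrix n n ℂ))))
    simpa using this
  set V : ℕ → Matrix n n ℂ := fun k => Y k * (msqrt ((Y k)ᴴ * Y k))⁻¹ with hV
  have hVk := fun k => polar_of_isUnit (hYunit k)
  letI : FirstCountableTopology (Matrix n n ℂ) :=
    inferInstanceAs (FirstCountableTopology (n → n → ℂ))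
  obtain ⟨W, hWmem, φ, hφmono, hφtend⟩ :=
    isCompact_unitaryGroup.tendsto_subseq (x := V) (fun k => (hVk k).1)
  have hYφ : Filter.Tendsto (Y ∘ φ) Filter.atTop (nhds X) :=
    hYtend.comp hφmono.tendsto_atTop
  have hPφ : Filter.Tendsto (fun k => msqrt ((Y (φ k))ᴴ * Y (φ k))) Filter.atTop
      (nhds (star W * X)) := by
    have h1 : Filter.Tendsto (fun k => star (V (φ k)) * Y (φ k)) Filter.atTop
        (nhds (star W * X)) := (hφtend.star).mul hYφ
    refine h1.congr fun k => ?_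
    have h2 := (hVk (φ k)).2
    have h3 : star (V (φ k)) * V (φ k) = 1 :=
      Matrix.mem_unitaryGroup_iff'.mp (hVk (φ k)).1
    calc star (V (φ k)) * Y (φ k)
        = star (V (φ k)) * (V (φ k) * msqrt ((Y (φ k))ᴴ * Y (φ k))) := by rw [← h2]
      _ = msqrt ((Y (φ k))ᴴ * Y (φ k)) := by rw [← Matrix.mul_assoc, h3, Matrix.one_mul]
  set P := star W * X with hP
  have hPherm : ∀ k, (msqrt ((Y (φ k))ᴴ * Y (φ k)))ᴴ = msqrt ((Y (φ k))ᴴ * Y (φ k)) :=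
    fun k => (msqrt_posSemidef (Matrix.posSemidef_conjTranspose_mul_self (Y (φ k)))).isHermitian
  have hPsd : P.PosSemidef := by
    refine Matrix.PosSemidef.of_dotProduct_mulVec_nonneg ?_ ?_
    · have h1 : Filter.Tendsto (fun k => (msqrt ((Y (φ k))ᴴ * Y (φ k)))ᴴ) Filter.atTop
          (nhds Pᴴ) := by
        have := hPφ.star
        simpa [Matrix.star_eq_conjTranspose] using this
      exact tendsto_nhds_unique (h1.congr fun k => hPherm k) hPφ
    · intro y
      have hcont : Continuous fun M : Matrix n n ℂ => star y ⬝ᵥ M *ᵥ y :=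
        continuous_const.dotProduct (continuous_id.matrix_mulVec continuous_const)
      have ht := (hcont.tendsto P).comp hPφ
      exact ge_of_tendsto ht (Filter.Eventually.of_forall fun k =>
        (msqrt_posSemidef (Matrix.posSemidef_conjTranspose_mul_self (Y (φ k)))).dotProduct_mulVec_nonneg y)
  have hPsq : P * P = Xᴴ * X := by
    refine tendsto_nhds_unique (hPφ.mul hPφ) ?_
    have h1 : Filter.Tendsto (fun k => (Y (φ k))ᴴ * Y (φ k)) Filter.atTop (nhds (Xᴴ * X)) := by
      have := (hYφ.star).mul hYφ
      simpa [Matrix.star_eq_conjTranspose] using this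
    refine h1.congr fun k => ?_
    exact (msqrt_mul_self (Matrix.posSemidef_conjTranspose_mul_self (Y (φ k)))).symm
  have hXVP : X = W * P := by
    refine tendsto_nhds_unique hYφ ?_
    refine (hφtend.mul hPφ).congr fun k => ?_
    exact ((hVk (φ k)).2).symm
  exact ⟨W, hWmem, by rw [msqrt_eq_of_sq hPsd hPsq]; exact hXVP⟩

lemma transpose_mem_unitaryGroup {V : Matrix n n ℂ} (hV : V ∈ Matrix.unitaryGroup n ℂ) :
    Vᵀ ∈ Matrix.unitaryGroup n ℂ := by
  refine Matrix.mem_unitaryGroup_iff'.mpr ?_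
  have hTc : Vᵀᴴ = Vᴴᵀ := by
    ext i j
    simp [Matrix.conjTranspose_apply, Matrix.transpose_apply]
  rw [Matrix.star_eq_conjTranspose, hTc, ← Matrix.transpose_mul]
  have h2 : V * Vᴴ = 1 := by
    rw [← Matrix.star_eq_conjTranspose]
    exact Matrix.mem_unitaryGroup_iff.mp hV
  rw [h2, Matrix.transpose_one]

lemma trace_nonneg_of_posSemidef {A : Matrix n n ℂ} (hA : A.PosSemidef) : 0 ≤ A.trace := by
  rw [Matrix.trace]
  refine Finset.sum_nonneg fun i _ => ?_
  have h := hA.dotProduct_mulVec_nonneg (Pi.single i 1)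
  have he : dotProduct (star (Pi.single i 1)) (A *ᵥ Pi.single i 1) = A i i := by
    simp [dotProduct, Matrix.mulVec, Pi.single_apply, Pi.star_apply,
      Finset.mul_sum, mul_ite, ite_mul, Finset.sum_ite_eq, Finset.sum_ite_eq']
  rw [he] at h
  exact h

end UhlmannAux

open Kronecker in
theorem uhlmann_theorem {α β : Type*} [Fintype α] [Fintype β] [DecidableEq α] [DecidableEq β]
    (ψ φ : α × β → ℂ)
    (hψ : ∑ x, ‖ψ x‖ ^ 2 = 1) (hφ : ∑ x, ‖φ x‖ ^ 2 = 1) :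
    ∃ U : Matrix β β ℂ, U ∈ Matrix.unitaryGroup β ℂ ∧
      fidelity (ptrSnd (outer ψ ψ)) (ptrSnd (outer φ φ)) =
        ‖star φ ⬝ᵥ (((1 : Matrix α α ℂ) ⊗ₖ U) *ᵥ ψ)‖ ^ 2 := by
  classical
  set M : Matrix α β ℂ := Matrix.of fun a b => ψ (a, b) with hMdef
  set N : Matrix α β ℂ := Matrix.of fun a b => φ (a, b) with hNdef
  have hρ : ptrSnd (outer ψ ψ) = M * Mᴴ := by
    ext a a'
    simp [ptrSnd, outer, Matrix.mul_apply, Matrix.conjTranspose_apply, hMdef]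
  have hσ : ptrSnd (outer φ φ) = N * Nᴴ := by
    ext a a'
    simp [ptrSnd, outer, Matrix.mul_apply, Matrix.conjTranspose_apply, hNdef]
  obtain ⟨V, hVmem, hVP⟩ := exists_unitary_polar (Nᴴ * M)
  set U : Matrix β β ℂ := (star V)ᵀ with hUdef
  have hUmem : U ∈ Matrix.unitaryGroup β ℂ :=
    transpose_mem_unitaryGroup (Unitary.star_mem hVmem)
  set P := msqrt ((Nᴴ * M)ᴴ * (Nᴴ * M)) with hPdef
  have hPpsd : P.PosSemidef := msqrt_posSemidef (Matrix.posSemidef_conjTranspose_mul_self _)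
  -- the inner product equals a trace
  have hinner : star φ ⬝ᵥ (((1 : Matrix α α ℂ) ⊗ₖ U) *ᵥ ψ) = (Nᴴ * M * star V).trace := by
    have hmv : ∀ x : α × β, (((1 : Matrix α α ℂ) ⊗ₖ U) *ᵥ ψ) x
        = ∑ b' : β, U x.2 b' * ψ (x.1, b') := by
      intro x
      rw [Matrix.mulVec, dotProduct, Fintype.sum_prod_type]
      simp only [Matrix.kroneckerMap_apply, Matrix.one_apply, ite_mul, one_mul, zero_mul]
      rw [Finset.sum_comm]
      simp
    have hL : star φ ⬝ᵥ (((1 : Matrix α α ℂ) ⊗ₖ U) *ᵥ ψ)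
        = ∑ a : α, ∑ b : β, ∑ b' : β, star (φ (a, b)) * (U b b' * ψ (a, b')) := by
      rw [dotProduct, Fintype.sum_prod_type]
      refine Finset.sum_congr rfl fun a _ => Finset.sum_congr rfl fun b _ => ?_
      rw [hmv (a, b), Finset.mul_sum]
      rfl
    have hRt : (Nᴴ * M * star V).trace
        = ∑ b : β, ∑ b' : β, ∑ a : α, star (N a b) * M a b' * (star V) b' b := by
      rw [Matrix.trace]
      simp only [Matrix.diag_apply, Matrix.mul_apply, Matrix.conjTranspose_apply,
        Finset.sum_mul]
    rw [hL, hRt]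
    rw [show (∑ b : β, ∑ b' : β, ∑ a : α, star (N a b) * M a b' * (star V) b' b)
        = ∑ b : β, ∑ a : α, ∑ b' : β, star (N a b) * M a b' * (star V) b' b from
      Finset.sum_congr rfl fun b _ => Finset.sum_comm]
    rw [show (∑ b : β, ∑ a : α, ∑ b' : β, star (N a b) * M a b' * (star V) b' b)
        = ∑ a : α, ∑ b : β, ∑ b' : β, star (N a b) * M a b' * (star V) b' b from
      Finset.sum_comm]
    refine Finset.sum_congr rfl fun a _ => Finset.sum_congr rfl fun b _ =>
      Finset.sum_congr rfl fun b' _ => ?_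
    have h1 : N a b = φ (a, b) := rfl
    have h2 : M a b' = ψ (a, b') := rfl
    have h3 : U b b' = (star V) b' b := rfl
    rw [h1, h2, ← h3]
    ring
  -- the trace equals the trace of P
  have htr : (Nᴴ * M * star V).trace = P.trace := by
    conv_lhs => rw [hVP]
    rw [Matrix.trace_mul_comm, ← Matrix.mul_assoc,
      Matrix.mem_unitaryGroup_iff'.mp hVmem, Matrix.one_mul]
  -- positivity of the trace
  have h0P : 0 ≤ P.trace := trace_nonneg_of_posSemidef hPpsd
  have him : P.trace.im = 0 := ((Complex.le_def.mp h0P).2).symm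
  have hre : 0 ≤ P.trace.re := by
    have := (Complex.le_def.mp h0P).1
    simpa using this
  have hnorm : ‖(Nᴴ * M * star V).trace‖ = P.trace.re := by
    rw [htr]
    rw [show P.trace = ((P.trace.re : ℝ) : ℂ) from Complex.ext rfl (by simp [him])]
    rw [Complex.norm_real]
    simpa using _root_.abs_of_nonneg hre
  -- fidelity equals (P.trace.re)^2
  have hfid : fidelity (ptrSnd (outer ψ ψ)) (ptrSnd (outer φ φ)) = P.trace.re ^ 2 := by
    rw [fidelity, hρ, hσ]
    set R := msqrt (M * Mᴴ) with hR
    set S := msqrt (N * Nᴴ) with hS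
    have hRps : R.PosSemidef := msqrt_posSemidef (Matrix.posSemidef_self_mul_conjTranspose M)
    have hSps : S.PosSemidef := msqrt_posSemidef (Matrix.posSemidef_self_mul_conjTranspose N)
    have hRR : R * R = M * Mᴴ := msqrt_mul_self (Matrix.posSemidef_self_mul_conjTranspose M)
    have hSS : S * S = N * Nᴴ := msqrt_mul_self (Matrix.posSemidef_self_mul_conjTranspose N)
    have e1 : (R * S)ᴴ * (R * S) = (S * M) * (S * M)ᴴ := by
      rw [Matrix.conjTranspose_mul, Matrix.conjTranspose_mul, hRps.isHermitian.eq,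
        hSps.isHermitian.eq]
      simp only [← Matrix.mul_assoc]
      rw [Matrix.mul_assoc S R R, hRR, ← Matrix.mul_assoc]
    have e2 : (Nᴴ * M)ᴴ * (Nᴴ * M) = (S * M)ᴴ * (S * M) := by
      simp only [Matrix.conjTranspose_mul, Matrix.conjTranspose_conjTranspose,
        hSps.isHermitian.eq]
      simp only [← Matrix.mul_assoc]
      rw [Matrix.mul_assoc Mᴴ N Nᴴ, ← hSS, ← Matrix.mul_assoc]
    have key : (msqrt ((R * S)ᴴ * (R * S))).trace = P.trace := by
      rw [e1, hPdef, e2]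
      exact (trace_msqrt_comm (S * M)).symm
    simp only [traceNorm]
    rw [key]
  refine ⟨U, hUmem, ?_⟩
  rw [hfid, hinner, hnorm]
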